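/- Let R = ℤ[[x,y]] be the formal power series ring in two variables, in which 1+x, 1+y and 1+xy are units. Define continuous ring automorphisms of R by K₁: x ↦ x, y ↦ y·(1+x); K₂: x ↦ x·(1+y)⁻¹, y ↦ y; and K₁₂: x ↦ x·(1+xy)⁻¹, y ↦ y·(1+xy). Then the pentagon equation holds: K₁ ∘ K₂ = K₂ ∘ K₁₂ ∘ K₁ as ring automorphisms of R. -/

import Mathlib

open MvPowerSeries

/-- The product topology on `R = ℤ[[x,y]]` (coefficient-wise convergence, with `ℤ`
discrete), with respect to which substitution automorphisms are continuous. -/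
instance : TopologicalSpace (MvPowerSeries (Fin 2) ℤ) :=
  @Pi.topologicalSpace ((Fin 2) →₀ ℕ) (fun _ => ℤ) (fun _ => ⊥)

/-- The pentagon equation for the Kontsevich–Soibelman transformations of
`R = ℤ[[x,y]]`.  Here `x = X 0`, `y = X 1`, and `K₁ : x ↦ x, y ↦ y(1+x)`,
`K₂ : x ↦ x(1+y)⁻¹, y ↦ y`, `K₁₂ : x ↦ x(1+xy)⁻¹, y ↦ y(1+xy)` are continuous ring
automorphisms of `R` (the conditions on `K₂ x` and `K₁₂ x` are phrased by clearing
the denominators `1+y` and `1+xy`, which are units of `R`).  Then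
`K₁ ∘ K₂ = K₂ ∘ K₁₂ ∘ K₁` as ring automorphisms of `R`. -/
theorem pentagon_equation
    (K₁ K₂ K₁₂ : MvPowerSeries (Fin 2) ℤ ≃+* MvPowerSeries (Fin 2) ℤ)
    (hK₁ : Continuous ⇑K₁) (hK₂ : Continuous ⇑K₂) (hK₁₂ : Continuous ⇑K₁₂)
    (h1x : K₁ (X 0) = X 0)
    (h1y : K₁ (X 1) = X 1 * (1 + X 0))
    (h2x : K₂ (X 0) * (1 + X 1) = X 0)
    (h2y : K₂ (X 1) = X 1)
    (h12x : K₁₂ (X 0) * (1 + X 0 * X 1) = X 0)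
    (h12y : K₁₂ (X 1) = X 1 * (1 + X 0 * X 1)) :
    ∀ f : MvPowerSeries (Fin 2) ℤ, K₁ (K₂ f) = K₂ (K₁₂ (K₁ f)) := by
  classical
  haveI hT2 : T2Space (MvPowerSeries (Fin 2) ℤ) :=
    @Pi.t2Space ((Fin 2) →₀ ℕ) (fun _ => ℤ) (fun _ => ⊥)
      (fun _ => @DiscreteTopology.toT2Space ℤ ⊥ ⟨rfl⟩)
  set a : MvPowerSeries (Fin 2) ℤ := K₂ (X 0) with ha
  set b : MvPowerSeries (Fin 2) ℤ := K₂ (K₁₂ (X 0)) with hbdef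
  -- the key relation for b
  have hb : b * (1 + a * X 1) = a := by
    have := congrArg K₂ h12x
    rw [map_mul, map_add, map_one, map_mul, h2y] at this
    exact this
  -- equality on X 0
  have hX0 : K₁ (K₂ (X 0)) = K₂ (K₁₂ (K₁ (X 0))) := by
    rw [h1x]
    -- both sides times the nonzerodivisor u = 1 + X 1 * (1 + X 0) equal X 0
    have hu : (1 + X 1 * (1 + X 0) : MvPowerSeries (Fin 2) ℤ) ∈
        nonZeroDivisors (MvPowerSeries (Fin 2) ℤ) := by
      apply mem_nonZeroDivisors_of_constantCoeff
      simp only [map_add, map_mul, map_one, constantCoeff_X, zero_mul, add_zero]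
      exact Submonoid.one_mem _
    have e1 : K₁ a * (1 + X 1 * (1 + X 0)) = X 0 := by
      have := congrArg K₁ h2x
      rw [map_mul, map_add, map_one, h1y, h1x] at this
      exact this
    have e2 : b * (1 + X 1 * (1 + X 0)) = X 0 := by
      linear_combination (1 + X 1 : MvPowerSeries (Fin 2) ℤ) * hb +
        (1 - b * X 1) * h2x
    exact mul_cancel_right_mem_nonZeroDivisors hu |>.mp (e1.trans e2.symm)
  -- equality on X 1
  have hX1 : K₁ (K₂ (X 1)) = K₂ (K₁₂ (K₁ (X 1))) := by
    rw [h2y, h1y]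
    have hrhs : K₂ (K₁₂ (X 1 * (1 + X 0))) = X 1 * (1 + a * X 1) * (1 + b) := by
      simp only [map_mul, map_add, map_one, h12y, h2y]
      try rw [← ha]
      try rw [← hbdef]
      try ring
    rw [hrhs]
    have hw : ((1 + X 1) * (1 + a * X 1) : MvPowerSeries (Fin 2) ℤ) ∈
        nonZeroDivisors (MvPowerSeries (Fin 2) ℤ) := by
      apply mem_nonZeroDivisors_of_constantCoeff
      have : constantCoeff ((1 + X 1) * (1 + a * X 1) : MvPowerSeries (Fin 2) ℤ) = 1 := by
        simp [map_mul, map_add, constantCoeff_X]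
      rw [this]
      exact Submonoid.one_mem _
    apply mul_cancel_right_mem_nonZeroDivisors hw |>.mp
    linear_combination (-(X 1 * (1 + X 1) * (1 + a * X 1)) :
        MvPowerSeries (Fin 2) ℤ) * h2x - X 1 * (1 + X 1) * (1 + a * X 1) * hb
  -- the two composite ring homs
  set φ : MvPowerSeries (Fin 2) ℤ →+* MvPowerSeries (Fin 2) ℤ :=
    RingHom.comp K₁.toRingHom K₂.toRingHom with hφ
  set ψ : MvPowerSeries (Fin 2) ℤ →+* MvPowerSeries (Fin 2) ℤ :=
    RingHom.comp K₂.toRingHom (RingHom.comp K₁₂.toRingHom K₁.toRingHom) with hψ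
  have hφc : Continuous ⇑φ := hK₁.comp hK₂
  have hψc : Continuous ⇑ψ := hK₂.comp (hK₁₂.comp hK₁)
  -- agreement on polynomials
  have hpoly : ∀ p : MvPolynomial (Fin 2) ℤ,
      φ (p : MvPowerSeries (Fin 2) ℤ) = ψ (p : MvPowerSeries (Fin 2) ℤ) := by
    have : φ.comp MvPolynomial.coeToMvPowerSeries.ringHom =
        ψ.comp MvPolynomial.coeToMvPowerSeries.ringHom := by
      apply MvPolynomial.ringHom_ext'
      · exact Subsingleton.elim _ _
      · intro i
        fin_cases i
        · simpa [MvPolynomial.coe_X, hφ, hψ] using hX0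
        · simpa [MvPolynomial.coe_X, hφ, hψ] using hX1
    intro p
    exact congrArg (fun g => g p) this
  -- density argument
  intro f
  have hlim : Filter.Tendsto
      (fun n : (Fin 2) →₀ ℕ =>
        ((trunc ℤ n f : MvPolynomial (Fin 2) ℤ) : MvPowerSeries (Fin 2) ℤ))
      Filter.atTop (nhds f) := by
    refine tendsto_pi_nhds.2 ?_
    intro d
    apply tendsto_nhds_of_eventually_eq
    have hd : ∀ n : (Fin 2) →₀ ℕ, n ≥ d + (Finsupp.single 0 1) → d < n := by
      intro n hn
      refine lt_of_lt_of_le ?_ hn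
      refine lt_add_of_pos_right d ?_
      exact pos_iff_ne_zero.2 fun h => one_ne_zero (Finsupp.single_eq_zero.mp h)
    exact Filter.eventually_atTop.2 ⟨d + Finsupp.single 0 1, fun n hn => by
      show ((trunc ℤ n f : MvPolynomial (Fin 2) ℤ) : MvPowerSeries (Fin 2) ℤ) d
        = f d
      have : coeff d ((trunc ℤ n f : MvPolynomial (Fin 2) ℤ) :
          MvPowerSeries (Fin 2) ℤ) = coeff d f := by
        rw [MvPolynomial.coeff_coe, coeff_trunc, if_pos (hd n hn)]
      exact this⟩
  have hmem : IsClosed {g : MvPowerSeries (Fin 2) ℤ | φ g = ψ g} :=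
    isClosed_eq hφc hψc
  have : φ f = ψ f := by
    refine hmem.mem_of_tendsto hlim ?_
    exact Filter.Eventually.of_forall fun n => hpoly _
  exact this
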